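/- arXiv:0712.1604 — 3 statements merged into one kernel-verified Lean document; each statement's English description precedes it below -/
import Mathlib

section
/- Let A be a commutative ring and (η_i)_{i≥0} a sequence in A with η_0 = 1 (set η_k = 0 for k < 0), and let (η'_i)_{i≥0} be its convolution inverse. Then for every n ≥ 1, η'_n = (−1)^{n(n+1)/2} · det(H_n), where H_n is the n×n matrix over A with entries (H_n)_{p,q} = η_{p+q+2−n} for 0 ≤ p, q ≤ n−1. (This is the algebraic content of the Myschenko-type formula of the paper: with η_i = a_{1,i} the coefficients of x·y^i in the formal group law of an oriented theory, η'_n is the cobordism class [P^n] of projective n-space, expressed as a signed Hankel determinant in the a_{1,i}.) -/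
open Finset Matrix

private lemma stmt0_detJ (A : Type*) [CommRing A] (m : ℕ) :
    (Matrix.of fun p q : Fin m => if (p : ℕ) + (q : ℕ) + 1 = m then (1 : A) else 0).det
      = (-1 : A) ^ (m * (m - 1) / 2) := by
  induction m with
  | zero => simp [Matrix.det_fin_zero]
  | succ m ih =>
    rw [Matrix.det_succ_row_zero, Finset.sum_eq_single (Fin.last m)]
    · have hsub : ((Matrix.of fun p q : Fin (m+1) =>
          if (p : ℕ) + (q : ℕ) + 1 = m + 1 then (1 : A) else 0).submatrix
            Fin.succ (Fin.last m).succAbove)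
          = Matrix.of fun p q : Fin m => if (p : ℕ) + (q : ℕ) + 1 = m then (1 : A) else 0 := by
        ext p q
        simp only [Matrix.submatrix_apply, Fin.succAbove_last, Matrix.of_apply, Fin.val_succ,
          Fin.coe_castSucc]
        exact if_congr (by omega) rfl rfl
      rw [hsub, ih]
      simp only [Matrix.of_apply, Fin.val_last, Fin.val_zero]
      simp only [show 0 + m + 1 = m + 1 from by omega, if_true, mul_one]
      rw [← pow_add]
      congr 1
      have key : (m+1)*m = m*(m-1)+2*m := by cases m with
        | zero => rfl
        | succ k => simp [Nat.succ_sub_one]; ring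
      simp only [Nat.add_sub_cancel]
      omega
    · intro j _ hj
      have hv : (j : ℕ) ≠ m := fun h => hj (by ext; simp [h])
      have h0 : (Matrix.of fun p q : Fin (m+1) =>
          if (p : ℕ) + (q : ℕ) + 1 = m + 1 then (1 : A) else 0) 0 j = 0 := by
        simp only [Matrix.of_apply, Fin.val_zero]
        simp only [show ¬(0 + (j : ℕ) + 1 = m + 1) from by omega, if_false]
      rw [h0, mul_zero, zero_mul]
    · intro h; exact absurd (Finset.mem_univ _) h

private lemma stmt0_key (A : Type*) [CommRing A] (η η' : ℕ → A) (ηZ : ℤ → A)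
    (hη0 : η 0 = 1)
    (hηZ : ∀ i : ℕ, ηZ (i : ℤ) = η i) (hηZneg : ∀ m : ℤ, m < 0 → ηZ m = 0)
    (hη'0 : η' 0 = 1)
    (hconv : ∀ k : ℕ, 1 ≤ k → ∑ i ∈ Finset.range (k + 1), η i * η' (k - i) = 0)
    (n p q : ℕ) (hp : p < n) (hq : q < n) :
    ∑ k ∈ Finset.range n,
        (if k ≤ p then η' (p - k) else 0) * ηZ ((k : ℤ) + (q : ℤ) + 2 - (n : ℤ))
      = if p + q + 2 = n then 1 else if q + 1 = n then -η' (p + 1) else 0 := by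
  have split : ∑ k ∈ Finset.range n,
        (if k ≤ p then η' (p - k) else 0) * ηZ ((k : ℤ) + (q : ℤ) + 2 - (n : ℤ))
      = ∑ k ∈ Finset.range (p+1),
        (if k ≤ p then η' (p - k) else 0) * ηZ ((k : ℤ) + (q : ℤ) + 2 - (n : ℤ)) := by
    symm
    apply Finset.sum_subset (Finset.range_subset_range.mpr (by omega))
    intro k _ hk
    rw [if_neg (by simp only [Finset.mem_range] at hk; omega), zero_mul]
  rw [split]
  by_cases hq1 : q + 1 = n
  · have hcong : ∀ k ∈ Finset.range (p+1),
        (if k ≤ p then η' (p - k) else 0) * ηZ ((k : ℤ) + (q : ℤ) + 2 - (n : ℤ))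
          = η (k+1) * η' (p + 1 - (k+1)) := by
      intro k hk
      simp only [Finset.mem_range] at hk
      rw [if_pos (by omega)]
      have hc : ((k : ℤ) + (q : ℤ) + 2 - (n : ℤ)) = ((k+1 : ℕ) : ℤ) := by omega
      rw [hc, hηZ, show p + 1 - (k+1) = p - k from by omega, mul_comm]
    rw [Finset.sum_congr rfl hcong]
    have hc := hconv (p+1) (by omega)
    rw [Finset.sum_range_succ'] at hc
    simp only [Nat.sub_zero, hη0, one_mul] at hc
    rw [if_neg (by omega), if_pos hq1]
    linear_combination hc
  · have hq2 : q + 2 ≤ n := by omega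
    set t := n - q - 2 with ht
    have hcong : ∀ k ∈ Finset.range (p+1),
        (if k ≤ p then η' (p - k) else 0) * ηZ ((k : ℤ) + (q : ℤ) + 2 - (n : ℤ))
          = if t ≤ k then η' (p - k) * η (k - t) else 0 := by
      intro k hk
      simp only [Finset.mem_range] at hk
      rw [if_pos (by omega)]
      by_cases hkt : t ≤ k
      · rw [if_pos hkt]
        congr 1
        have hc : ((k : ℤ) + (q : ℤ) + 2 - (n : ℤ)) = ((k - t : ℕ) : ℤ) := by omega
        rw [hc, hηZ]
      · rw [if_neg hkt, hηZneg _ (by omega), mul_zero]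
    rw [Finset.sum_congr rfl hcong]
    by_cases hpt : t ≤ p
    · have hIco : ∑ k ∈ Finset.range (p+1), (if t ≤ k then η' (p - k) * η (k - t) else 0)
          = ∑ k ∈ Finset.Ico t (p+1), (if t ≤ k then η' (p - k) * η (k - t) else 0) := by
        symm
        apply Finset.sum_subset
        · intro x hx
          simp only [Finset.mem_Ico] at hx
          simp only [Finset.mem_range]
          omega
        · intro k hk1 hk2
          simp only [Finset.mem_Ico] at hk2
          simp only [Finset.mem_range] at hk1
          rw [if_neg (by omega)]
      rw [hIco, Finset.sum_Ico_eq_sum_range]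
      have hsimp : ∀ j ∈ Finset.range (p+1-t),
          (if t ≤ t+j then η' (p - (t+j)) * η (t+j-t) else 0) = η j * η' ((p-t) - j) := by
        intro j _
        rw [if_pos (Nat.le_add_right _ _)]
        have h1 : p - (t+j) = (p-t) - j := by omega
        have h2 : t+j-t = j := by omega
        rw [h1, h2, mul_comm]
      rw [Finset.sum_congr rfl hsimp]
      have hrange : p + 1 - t = (p - t) + 1 := by omega
      rw [hrange]
      by_cases hd0 : p - t = 0
      · rw [if_pos (by omega)]
        simp [hd0, hη'0, hη0]
      · rw [hconv (p-t) (by omega), if_neg (by omega), if_neg (by omega)]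
    · have hz : ∀ k ∈ Finset.range (p+1),
          (if t ≤ k then η' (p - k) * η (k - t) else 0) = 0 := by
        intro k hk
        simp only [Finset.mem_range] at hk
        rw [if_neg (by omega)]
      rw [Finset.sum_congr rfl hz, Finset.sum_const_zero,
        if_neg (by omega), if_neg (by omega)]

/-- Let `A` be a commutative ring and `(η_i)_{i ≥ 0}` a sequence in `A` with
`η_0 = 1` (extended by `0` in negative degrees, via `ηZ`), and let `(η'_i)_{i ≥ 0}` be its
convolution inverse.  Then for every `n ≥ 1`,
`η'_n = (−1)^{n(n+1)/2} · det H_n`, where `H_n` is the `n × n` matrix with entries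
`(H_n)_{p,q} = η_{p+q+2−n}` for `0 ≤ p, q ≤ n−1`. -/
theorem stmt0 (A : Type*) [CommRing A] (η η' : ℕ → A) (ηZ : ℤ → A)
    (hη0 : η 0 = 1)
    (hηZ : ∀ i : ℕ, ηZ (i : ℤ) = η i) (hηZneg : ∀ m : ℤ, m < 0 → ηZ m = 0)
    (hη'0 : η' 0 = 1)
    (hconv : ∀ k : ℕ, 1 ≤ k → ∑ i ∈ Finset.range (k + 1), η i * η' (k - i) = 0)
    (n : ℕ) (hn : 1 ≤ n) :
    η' n = (-1 : A) ^ (n * (n + 1) / 2) *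
      (Matrix.of fun p q : Fin n => ηZ ((p : ℤ) + (q : ℤ) + 2 - (n : ℤ))).det := by
  obtain ⟨m, rfl⟩ : ∃ m, n = m + 1 := ⟨n - 1, by omega⟩
  set H : Matrix (Fin (m+1)) (Fin (m+1)) A :=
    Matrix.of fun p q : Fin (m+1) => ηZ ((p : ℤ) + (q : ℤ) + 2 - ((m+1 : ℕ) : ℤ)) with hH
  set L : Matrix (Fin (m+1)) (Fin (m+1)) A :=
    Matrix.of fun p q : Fin (m+1) => if (q : ℕ) ≤ (p : ℕ) then η' ((p : ℕ) - (q : ℕ)) else 0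
    with hL
  set M : Matrix (Fin (m+1)) (Fin (m+1)) A :=
    Matrix.of fun p q : Fin (m+1) => if (p : ℕ) + (q : ℕ) + 2 = m + 1 then 1
      else if (q : ℕ) + 1 = m + 1 then -η' ((p : ℕ) + 1) else 0 with hM
  -- L is lower triangular with 1's on the diagonal
  have hdetL : L.det = 1 := by
    rw [Matrix.det_of_lowerTriangular L (by
      intro i j hij
      simp only [hL, Matrix.of_apply]
      rw [if_neg (by simp only [OrderDual.toDual_lt_toDual] at hij; omega)])]
    simp [hL, hη'0]
  -- the product L * H
  have hLH : L * H = M := by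
    ext p q
    rw [Matrix.mul_apply]
    simp only [hL, hM, hH, Matrix.of_apply]
    rw [Fin.sum_univ_eq_sum_range (fun k : ℕ =>
      (if k ≤ (p : ℕ) then η' ((p : ℕ) - k) else 0) *
        ηZ ((k : ℤ) + ((q : ℕ) : ℤ) + 2 - ((m+1 : ℕ) : ℤ))) (m+1)]
    exact stmt0_key A η η' ηZ hη0 hηZ hηZneg hη'0 hconv (m+1) p q p.isLt q.isLt
  -- determinant of M
  have hdetM : M.det = -η' (m+1) * (-1 : A) ^ (m * (m - 1) / 2) := by
    rw [Matrix.det_succ_row _ (Fin.last m), Finset.sum_eq_single (Fin.last m)]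
    · have hsub : (M.submatrix (Fin.last m).succAbove (Fin.last m).succAbove)
          = Matrix.of fun p q : Fin m => if (p : ℕ) + (q : ℕ) + 1 = m then (1 : A) else 0 := by
        ext p q
        have hq := q.isLt
        simp only [hM, Matrix.submatrix_apply, Fin.succAbove_last, Matrix.of_apply,
          Fin.coe_castSucc]
        by_cases hc : (p : ℕ) + (q : ℕ) + 1 = m
        · rw [if_pos (by omega), if_pos hc]
        · rw [if_neg (by omega), if_neg (by omega), if_neg hc]
      rw [hsub, stmt0_detJ]
      simp only [hM, Matrix.of_apply, Fin.val_last]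
      rw [if_neg (by omega)]
      simp only [if_true]
      have he : (-1 : A) ^ (m + m) = 1 := Even.neg_one_pow ⟨m, rfl⟩
      rw [he, one_mul]
    · intro j _ hj
      have hv : (j : ℕ) ≠ m := fun h => hj (by ext; simp [h])
      have hq := j.isLt
      have h0 : M (Fin.last m) j = 0 := by
        simp only [hM, Matrix.of_apply, Fin.val_last]
        rw [if_neg (by omega), if_neg (by omega)]
      rw [h0, mul_zero, zero_mul]
    · intro h; exact absurd (Finset.mem_univ _) h
  have hdetH : H.det = -η' (m+1) * (-1 : A) ^ (m * (m - 1) / 2) := by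
    rw [← hdetM, ← hLH, Matrix.det_mul, hdetL, one_mul]
  rw [hdetH]
  -- sign bookkeeping
  have heven : ((m+1) * (m+1+1) / 2 + (m * (m-1) / 2 + 1)) % 2 = 0 := by
    have k1 : (m+1)*(m+1+1) = m*(m-1) + (4*m+2) := by cases m with
      | zero => rfl
      | succ k => simp [Nat.succ_sub_one]; ring
    have e1 : (m+1)*(m+1+1) % 2 = 0 := by
      have := Nat.even_mul_succ_self (m+1)
      rwa [Nat.even_iff] at this
    have e2 : m*(m-1) % 2 = 0 := by
      have : Even (m*(m-1)) := by
        cases m with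
        | zero => simp
        | succ k => rw [Nat.succ_sub_one, mul_comm]; exact Nat.even_mul_succ_self k
      rwa [Nat.even_iff] at this
    omega
  have hone : (-1 : A) ^ ((m+1) * (m+1+1) / 2 + (m * (m-1) / 2 + 1)) = 1 :=
    Even.neg_one_pow (Nat.even_iff.mpr heven)
  calc η' (m+1)
      = (-1 : A) ^ ((m+1) * (m+1+1) / 2 + (m * (m-1) / 2 + 1)) * η' (m+1) := by
        rw [hone, one_mul]
    _ = (-1 : A) ^ ((m+1) * (m+1+1) / 2) * (-η' (m+1) * (-1 : A) ^ (m * (m-1) / 2)) := by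
        rw [pow_add, pow_add, pow_one]
        ring
end

section
/- Let R be a commutative ring. If u ∈ R[[X]] is a unit of the formal power series ring R[[X]] and v ∈ R[[X]] is nilpotent, then the element u·X + v is a non-zero-divisor of R[[X]]. (This is the non-zero-divisor criterion used in the paper's proof of the formula for the fundamental class of the diagonal of P^n × P^n.) -/
lemma X_nzd (R : Type*) [CommRing R] :
    (PowerSeries.X : PowerSeries R) ∈ nonZeroDivisors (PowerSeries R) := by
  rw [mem_nonZeroDivisors_iff_right]
  intro h hh
  ext n
  simpa using congrArg (PowerSeries.coeff (R := R) (n + 1)) hh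

/-- Let `R` be a commutative ring.  If `u ∈ R[[X]]` is a unit of the formal power
series ring and `v ∈ R[[X]]` is nilpotent, then `u·X + v` is a non-zero-divisor of `R[[X]]`. -/
theorem stmt6 (R : Type*) [CommRing R] (u v : PowerSeries R)
    (hu : IsUnit u) (hv : IsNilpotent v) :
    (u * PowerSeries.X + v) ∈ nonZeroDivisors (PowerSeries R) := by
  obtain ⟨n, hn⟩ := hv
  have hx : (u * PowerSeries.X) ∈ nonZeroDivisors (PowerSeries R) :=
    mul_mem (hu.mem_nonZeroDivisors) (X_nzd R)
  rw [mem_nonZeroDivisors_iff_right]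
  intro h hh
  have key : ∀ k : ℕ, h * (u * PowerSeries.X) ^ k = h * (-v) ^ k := by
    intro k
    induction k with
    | zero => simp
    | succ k ih =>
      have h1 : h * (u * PowerSeries.X) = h * (-v) := by linear_combination hh
      calc h * (u * PowerSeries.X) ^ (k + 1)
          = (h * (u * PowerSeries.X)) * (u * PowerSeries.X) ^ k := by ring
        _ = (h * (-v)) * (u * PowerSeries.X) ^ k := by rw [h1]
        _ = (h * (u * PowerSeries.X) ^ k) * (-v) := by ring
        _ = (h * (-v) ^ k) * (-v) := by rw [ih]
        _ = h * (-v) ^ (k + 1) := by ring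
  have h0 : h * (u * PowerSeries.X) ^ n = 0 := by
    rw [key n, neg_pow, hn]; ring
  exact (pow_mem hx n).2 h h0
end

section
/- Let A be a commutative ring, F(x,y) = Σ_{k,l≥0} a_{k,l} x^k y^l a commutative formal group law over A, m its formal inverse, and n ≥ 0 an integer. Let R = A[Y]/(Y^{n+1}) and let ȳ denote the image of Y in R, so that ȳ is nilpotent and m(ȳ) = Σ_{k≥1} m_k ȳ^k is a well-defined nilpotent element of R. Then the element b = Σ_{k≥0} c_k X^k of R[[X]], where c_k = Σ_{l≥0} a_{k,l} · m(ȳ)^l (a finite sum since m(ȳ) is nilpotent), is a non-zero-divisor of R[[X]]. (In the paper this element is F(c̃, m(d)) in H^{**}(P^∞ × P^n) = (A[d]/d^{n+1})[[c̃]], and it is shown to be of the form (unit)·c̃ + (nilpotent), hence a non-zero-divisor.) -/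
/-- The coefficient of `x^p y^q` in the `i`-th power of the two-variable formal power series
`F(x,y) = Σ_{k,l} a_{k,l} x^k y^l` with coefficient family `a`. -/
noncomputable def powCoeff2 {A : Type*} [CommRing A] (a : ℕ → ℕ → A) (i p q : ℕ) : A :=
  ∑ u ∈ Finset.Nat.antidiagonalTuple i p, ∑ v ∈ Finset.Nat.antidiagonalTuple i q,
    ∏ t : Fin i, a (u t) (v t)

/-- The coefficient of `t^s` in the `l`-th power of the one-variable formal power series
`m(t) = Σ_k m_k t^k` with coefficient family `m`. -/
noncomputable def powCoeff1 {A : Type*} [CommRing A] (m : ℕ → A) (l s : ℕ) : A :=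
  ∑ c ∈ Finset.Nat.antidiagonalTuple l s, ∏ i : Fin l, m (c i)

/-- A commutative formal group law over a commutative ring `A`, described by its family of
coefficients `a k l` (the coefficient of `x^k y^l` in `F(x,y)`).  The axioms `F(x,0) = x`,
`F(x,y) = F(y,x)` and `F(F(x,y),z) = F(x,F(y,z))` are expressed coefficientwise; note that
`x_axiom` gives `a 0 0 = 0` (zero constant term, so that all the compositions are well defined
and have coefficients given by finite sums) and `a 1 0 = 1`, and together with `comm`,
`a 0 1 = 1`. -/
structure FormalGroupLaw (A : Type*) [CommRing A] where
  /-- the coefficient of `x^k y^l` in `F(x,y)` -/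
  a : ℕ → ℕ → A
  /-- `F(x,0) = x` -/
  x_axiom : ∀ i : ℕ, a i 0 = if i = 1 then 1 else 0
  /-- `F(x,y) = F(y,x)` -/
  comm : ∀ i j : ℕ, a i j = a j i
  /-- `F(F(x,y),z) = F(x,F(y,z))`: the coefficient of `x^p y^q z^r` on both sides agree.
  On the left it is `Σ_i a_{i,r} · coeff_{p,q}(F^i)` (a finite sum as `a 0 0 = 0`),
  on the right it is `Σ_j a_{p,j} · coeff_{q,r}(F^j)`. -/
  assoc : ∀ p q r : ℕ,
    ∑ i ∈ Finset.range (p + q + 1), a i r * powCoeff2 a i p q =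
      ∑ j ∈ Finset.range (q + r + 1), a p j * powCoeff2 a j q r

/-- `m` (given by its coefficients, `m 0 = 0`) is the formal inverse of the formal group law
`F`: the identity `F(t, m(t)) = 0` holds, i.e. for every `w ≥ 0` the coefficient of `t^w` in
`F(t, m(t)) = Σ_{k,l} a_{k,l} t^k m(t)^l`, namely
`Σ_{k+s=w} Σ_{l} a_{k,l} · coeff_s(m(t)^l)` (a finite sum since `m 0 = 0` forces
`coeff_s(m(t)^l) = 0` for `l > s`), vanishes. -/
def FormalGroupLaw.IsFormalInverse {A : Type*} [CommRing A] (F : FormalGroupLaw A)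
    (m : ℕ → A) : Prop :=
  m 0 = 0 ∧ ∀ w : ℕ, ∑ ks ∈ Finset.HasAntidiagonal.antidiagonal w,
    ∑ l ∈ Finset.range (ks.2 + 1), F.a ks.1 l * powCoeff1 m l ks.2 = 0

lemma aux_X_pow_mul_eq_zero {S : Type*} [CommRing S] (N : ℕ) {g : PowerSeries S}
    (h : PowerSeries.X ^ N * g = 0) : g = 0 := by
  induction N with
  | zero => simpa using h
  | succ N ih =>
    have h' : PowerSeries.X * (PowerSeries.X ^ N * g) = 0 := by rw [← h]; ring
    apply ih
    ext k
    have := congrArg (PowerSeries.coeff (k + 1)) h'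
    simpa [PowerSeries.coeff_succ_X_mul] using this

lemma aux_nonZeroDivisor {S : Type*} [CommRing S] (f : PowerSeries S)
    (h0 : IsNilpotent (PowerSeries.constantCoeff f))
    (h1 : IsUnit (PowerSeries.coeff 1 f)) :
    f ∈ nonZeroDivisors (PowerSeries S) := by
  obtain ⟨N, hN⟩ := h0
  set h : PowerSeries S := PowerSeries.mk fun p => PowerSeries.coeff (p + 1) f with hh
  have hfu : f = PowerSeries.X * h + PowerSeries.C (PowerSeries.constantCoeff f) :=
    PowerSeries.eq_X_mul_shift_add_const f
  have hhu : IsUnit h := by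
    rw [PowerSeries.isUnit_iff_constantCoeff]
    simpa [hh, PowerSeries.constantCoeff_mk] using h1
  rw [mem_nonZeroDivisors_iff_right]
  intro g hg
  have step : PowerSeries.C (PowerSeries.constantCoeff f) * g = -(PowerSeries.X * h) * g := by
    have hg' : g * (PowerSeries.X * h + PowerSeries.C (PowerSeries.constantCoeff f)) = 0 := by
      rw [← hfu]; exact hg
    linear_combination hg'
  have key : ∀ j : ℕ, (PowerSeries.C (PowerSeries.constantCoeff f)) ^ j * g
      = (-(PowerSeries.X * h)) ^ j * g := by
    intro j
    induction j with
    | zero => simp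
    | succ j ih =>
      calc (PowerSeries.C (PowerSeries.constantCoeff f)) ^ (j + 1) * g
          = (PowerSeries.C (PowerSeries.constantCoeff f)) ^ j
            * ((PowerSeries.C (PowerSeries.constantCoeff f)) * g) := by ring
        _ = (PowerSeries.C (PowerSeries.constantCoeff f)) ^ j
            * (-(PowerSeries.X * h) * g) := by rw [step]
        _ = -(PowerSeries.X * h)
            * ((PowerSeries.C (PowerSeries.constantCoeff f)) ^ j * g) := by ring
        _ = -(PowerSeries.X * h) * ((-(PowerSeries.X * h)) ^ j * g) := by rw [ih]
        _ = (-(PowerSeries.X * h)) ^ (j + 1) * g := by ring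
  have hz : (-(PowerSeries.X * h)) ^ N * g = 0 := by
    rw [← key N, ← map_pow, hN, map_zero, zero_mul]
  have hz2 : (PowerSeries.X * h) ^ N * g = 0 := by
    rw [neg_pow] at hz
    rcases neg_one_pow_eq_or (PowerSeries S) N with he | he <;> rw [he] at hz
    · simpa using hz
    · rw [neg_one_mul, neg_mul, neg_eq_zero] at hz; exact hz
  have hz3 : PowerSeries.X ^ N * (h ^ N * g) = 0 := by
    rw [← mul_assoc, ← mul_pow]; exact hz2
  have := aux_X_pow_mul_eq_zero N hz3
  exact ((hhu.pow N).mul_right_eq_zero).mp this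

/-- let `F` be a commutative formal group law over `A` with coefficients `a_{k,l}`
and formal inverse `m`, and let `n ≥ 0`.  Let `R = A[Y]/(Y^{n+1})` and `ȳ` the image of `Y`
in `R`, so that `ȳ` is nilpotent and `m(ȳ) = Σ_{k ≥ 1} m_k ȳ^k` is a well-defined nilpotent
element of `R` (the sum is finite: only the terms with `k ≤ n` survive since `ȳ^{n+1} = 0`).
Then the power series `b = Σ_{k ≥ 0} c_k X^k ∈ R[[X]]`, with
`c_k = Σ_{l ≥ 0} a_{k,l}·m(ȳ)^l` (a finite sum: `m(ȳ)^l = 0` for `l ≥ n+1` since `m(ȳ)` lies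
in the ideal generated by `ȳ`), is a non-zero-divisor of `R[[X]]`. -/
theorem stmt7 (A : Type*) [CommRing A] (F : FormalGroupLaw A) (m : ℕ → A)
    (hm : F.IsFormalInverse m) (n : ℕ)
    (y : Polynomial A ⧸ Ideal.span {(Polynomial.X : Polynomial A) ^ (n + 1)})
    (hy : y = Ideal.Quotient.mk _ Polynomial.X)
    (my : Polynomial A ⧸ Ideal.span {(Polynomial.X : Polynomial A) ^ (n + 1)})
    (hmy : my = ∑ k ∈ Finset.Icc 1 n,
      algebraMap A (Polynomial A ⧸ Ideal.span {(Polynomial.X : Polynomial A) ^ (n + 1)}) (m k)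
        * y ^ k)
    (c : ℕ → Polynomial A ⧸ Ideal.span {(Polynomial.X : Polynomial A) ^ (n + 1)})
    (hc : ∀ k : ℕ, c k = ∑ l ∈ Finset.range (n + 1),
      algebraMap A (Polynomial A ⧸ Ideal.span {(Polynomial.X : Polynomial A) ^ (n + 1)}) (F.a k l)
        * my ^ l) :
    PowerSeries.mk c ∈
      nonZeroDivisors
        (PowerSeries (Polynomial A ⧸ Ideal.span {(Polynomial.X : Polynomial A) ^ (n + 1)})) := by
  have hy0 : y ^ (n + 1) = 0 := by
    rw [hy, ← map_pow, Ideal.Quotient.eq_zero_iff_mem]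
    exact Ideal.mem_span_singleton_self _
  have hmyf : ∃ z, my = y * z := by
    refine ⟨∑ k ∈ Finset.Icc 1 n, algebraMap A _ (m k) * y ^ (k - 1), ?_⟩
    rw [hmy, Finset.mul_sum]
    refine Finset.sum_congr rfl fun k hk => ?_
    obtain ⟨j, rfl⟩ : ∃ j, k = j + 1 := ⟨k - 1, by have := (Finset.mem_Icc.mp hk).1; omega⟩
    simp only [Nat.add_sub_cancel, pow_succ]
    ring
  have nilmy : IsNilpotent my := by
    obtain ⟨z, hz⟩ := hmyf
    exact ⟨n + 1, by rw [hz, mul_pow, hy0, zero_mul]⟩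
  have hc0 : c 0 = my := by
    rw [hc 0]
    have ha : ∀ l, F.a 0 l = if l = 1 then 1 else 0 := fun l => by rw [F.comm, F.x_axiom]
    simp only [ha, apply_ite (algebraMap A (Polynomial A ⧸ Ideal.span {(Polynomial.X : Polynomial A) ^ (n + 1)})), map_one, map_zero, ite_mul, one_mul, zero_mul]
    rw [Finset.sum_ite_eq' (Finset.range (n + 1)) 1 (fun l => my ^ l)]
    by_cases hn : 1 ∈ Finset.range (n + 1)
    · simp [hn]
    · have hn0 : n = 0 := by simp only [Finset.mem_range] at hn; omega
      simp [hn, hmy, hn0]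
  have hc1 : IsUnit (c 1) := by
    rw [hc 1, Finset.sum_range_succ']
    have ha10 : F.a 1 0 = 1 := by rw [F.x_axiom]; simp
    rw [ha10]
    simp only [map_one, pow_zero, mul_one, one_mul]
    refine IsNilpotent.isUnit_add_one ?_
    refine isNilpotent_sum fun i _ => ?_
    have hp : IsNilpotent (my ^ (i + 1)) := by
      obtain ⟨N, hN⟩ := nilmy
      exact ⟨N, by rw [← pow_mul, mul_comm, pow_mul, hN, zero_pow (Nat.succ_ne_zero i)]⟩
    exact Commute.isNilpotent_mul_left (Commute.all _ _) hp
  exact aux_nonZeroDivisor _ (by rw [PowerSeries.constantCoeff_mk, hc0]; exact nilmy)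
    (by rw [PowerSeries.coeff_mk]; exact hc1)
end
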